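/- If H₀ = I and H_{k+1} is obtained from H_k by a block BFGS update with matrices G_k satisfying λI ⪯ G_k ⪯ ΛI and full-rank sketches D_k, then after M updates: λ_min(H_M) ≥ 1/(1 + MΛ) and λ_max(H_M) ≤ (1+√κ)^{2M}(1 + 1/(λ(2√κ + κ))), where κ = Λ/λ. -/

import Mathlib

open Matrix


lemma dot_swap {d : ℕ} (M : Matrix (Fin d) (Fin d) ℝ) (hsym : Mᵀ = M)
    (a b : Fin d → ℝ) : b ⬝ᵥ (M *ᵥ a) = a ⬝ᵥ (M *ᵥ b) := by
  rw [dotProduct_mulVec, ← mulVec_transpose, hsym, dotProduct_comm]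

lemma dps {n : ℕ} (v : Fin n → ℝ) : 0 ≤ v ⬝ᵥ v :=
  Finset.sum_nonneg fun i _ => mul_self_nonneg (v i)

lemma cs_psd {d : ℕ} (M : Matrix (Fin d) (Fin d) ℝ) (hM : M.PosSemidef)
    (a b : Fin d → ℝ) :
    (a ⬝ᵥ (M *ᵥ b))^2 ≤ (a ⬝ᵥ (M *ᵥ a)) * (b ⬝ᵥ (M *ᵥ b)) := by
  have hba : b ⬝ᵥ (M *ᵥ a) = a ⬝ᵥ (M *ᵥ b) := dot_swap M hM.1 a b
  have key : ∀ t : ℝ, 0 ≤ (b ⬝ᵥ (M *ᵥ b)) * (t*t) + (2 * (a ⬝ᵥ (M *ᵥ b))) * t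
      + (a ⬝ᵥ (M *ᵥ a)) := by
    intro t
    have h0 := hM.dotProduct_mulVec_nonneg (a + t • b)
    simp only [star_trivial] at h0
    have : (a + t • b) ⬝ᵥ (M *ᵥ (a + t • b)) =
        (b ⬝ᵥ (M *ᵥ b)) * (t*t) + (2 * (a ⬝ᵥ (M *ᵥ b))) * t + (a ⬝ᵥ (M *ᵥ a)) := by
      rw [mulVec_add, mulVec_smul, add_dotProduct, smul_dotProduct,
        dotProduct_add, dotProduct_add, dotProduct_smul, dotProduct_smul, hba]
      simp only [smul_eq_mul]
      ring
    linarith [this ▸ h0]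
  have hd := discrim_le_zero key
  rw [discrim] at hd
  nlinarith [hd]

lemma cs_dot {d : ℕ} (a b : Fin d → ℝ) : (a ⬝ᵥ b)^2 ≤ (a ⬝ᵥ a) * (b ⬝ᵥ b) := by
  have := cs_psd (1 : Matrix (Fin d) (Fin d) ℝ) Matrix.PosDef.one.posSemidef a b
  simpa only [one_mulVec] using this

lemma psd_quad {d : ℕ} {M : Matrix (Fin d) (Fin d) ℝ} (h : M.PosSemidef)
    (x : Fin d → ℝ) : 0 ≤ x ⬝ᵥ (M *ᵥ x) := by
  simpa only [star_trivial] using h.dotProduct_mulVec_nonneg x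

lemma inj_of_rank {d q : ℕ} (D : Matrix (Fin d) (Fin q) ℝ) (hD : D.rank = q) :
    ∀ z : Fin q → ℝ, z ≠ 0 → D *ᵥ z ≠ 0 := by
  have hker : LinearMap.ker D.mulVecLin = ⊥ := by
    have h1 := LinearMap.finrank_range_add_finrank_ker D.mulVecLin
    rw [Matrix.rank] at hD
    rw [hD] at h1
    have h2 : Module.finrank ℝ (Fin q → ℝ) = q := by simp
    rw [h2] at h1
    have h3 : Module.finrank ℝ (LinearMap.ker D.mulVecLin) = 0 := by omega
    exact Submodule.finrank_eq_zero.mp h3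
  intro z hz h0
  apply hz
  have : D.mulVecLin z = 0 := h0
  exact (LinearMap.ker_eq_bot.mp hker) (by simp [this])


lemma bfgs_core {d q : ℕ} (lam Lam : ℝ) (hlam : 0 < lam) (hll : lam ≤ Lam)
    (G : Matrix (Fin d) (Fin d) ℝ) (D : Matrix (Fin d) (Fin q) ℝ)
    (hGs : Gᵀ = G)
    (hGlo : ∀ x : Fin d → ℝ, lam * (x ⬝ᵥ x) ≤ x ⬝ᵥ (G *ᵥ x))
    (hGhi : ∀ x : Fin d → ℝ, x ⬝ᵥ (G *ᵥ x) ≤ Lam * (x ⬝ᵥ x))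
    (hGpsd : G.PosSemidef)
    (hAinv : (Dᵀ * G * D) * (Dᵀ * G * D)⁻¹ = 1)
    (hΔsym : ((Dᵀ * G * D)⁻¹)ᵀ = (Dᵀ * G * D)⁻¹)
    (H : Matrix (Fin d) (Fin d) ℝ)
    (x : Fin d → ℝ) :
    ∃ (y : Fin d → ℝ) (p ip V2 : ℝ),
      x ⬝ᵥ ((D * (Dᵀ * G * D)⁻¹ * Dᵀ +
        (1 - D * (Dᵀ * G * D)⁻¹ * (G * D)ᵀ) * H *
          (1 - (G * D) * (Dᵀ * G * D)⁻¹ * Dᵀ)) *ᵥ x) = p + y ⬝ᵥ (H *ᵥ y) ∧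
      0 ≤ p ∧ lam * p ≤ x ⬝ᵥ x ∧ 0 ≤ V2 ∧ V2 ≤ Lam * p ∧
      ip ^ 2 ≤ (x ⬝ᵥ x) * V2 ∧ y ⬝ᵥ y = x ⬝ᵥ x - 2 * ip + V2 := by
  have hs0 : 0 ≤ x ⬝ᵥ x := dps x
  obtain ⟨z, hz⟩ : ∃ z, (Dᵀ * G * D)⁻¹ *ᵥ (Dᵀ *ᵥ x) = z := ⟨_, rfl⟩
  obtain ⟨w, hw⟩ : ∃ w, D *ᵥ z = w := ⟨_, rfl⟩
  obtain ⟨v, hv⟩ : ∃ v, G *ᵥ w = v := ⟨_, rfl⟩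
  -- A z = Dᵀ x
  have hAz : (Dᵀ * G * D) *ᵥ z = Dᵀ *ᵥ x := by
    rw [← hz, mulVec_mulVec, hAinv, one_mulVec]
  have hAz2 : (Dᵀ * G * D) *ᵥ z = Dᵀ *ᵥ v := by
    rw [← hv, ← hw, ← mulVec_mulVec, ← mulVec_mulVec]
  have hpzAz : z ⬝ᵥ ((Dᵀ * G * D) *ᵥ z) = x ⬝ᵥ w := by
    rw [hAz, dotProduct_mulVec, vecMul_transpose, hw, dotProduct_comm]
  have hwv : w ⬝ᵥ v = x ⬝ᵥ w := by
    have h := hpzAz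
    rw [hAz2, dotProduct_mulVec, vecMul_transpose, hw] at h
    exact h
  have hplow : lam * (w ⬝ᵥ w) ≤ x ⬝ᵥ w := by
    have h := hGlo w
    rw [hv, hwv] at h
    exact h
  have hP0 : 0 ≤ x ⬝ᵥ w := le_trans (mul_nonneg hlam.le (dps w)) hplow
  have hPs : lam * (x ⬝ᵥ w) ≤ x ⬝ᵥ x := by
    have hcs := cs_dot x w
    rcases eq_or_lt_of_le hP0 with h | h
    · rw [← h]
      simpa using hs0
    · refine le_of_mul_le_mul_right ?_ h
      nlinarith [mul_le_mul_of_nonneg_left hcs hlam.le,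
        mul_le_mul_of_nonneg_left hplow hs0]
  have hV2p : v ⬝ᵥ v ≤ Lam * (x ⬝ᵥ w) := by
    have hcs := cs_psd G hGpsd w v
    have h1 : w ⬝ᵥ (G *ᵥ v) = v ⬝ᵥ v := by
      rw [dot_swap G hGs v w, hv]
    have h2 : w ⬝ᵥ (G *ᵥ w) = x ⬝ᵥ w := by rw [hv, hwv]
    have h3 : v ⬝ᵥ (G *ᵥ v) ≤ Lam * (v ⬝ᵥ v) := hGhi v
    rw [h1, h2] at hcs
    rcases eq_or_lt_of_le (dps v) with h | h
    · rw [← h]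
      exact mul_nonneg (le_trans hlam.le hll) hP0
    · refine le_of_mul_le_mul_right ?_ h
      nlinarith [mul_le_mul_of_nonneg_left h3 hP0]
  refine ⟨x - v, x ⬝ᵥ w, x ⬝ᵥ v, v ⬝ᵥ v, ?_, hP0, hPs, dps v, hV2p, cs_dot x v, ?_⟩
  · -- quadratic form identity
    have hRx : (1 - (G * D) * (Dᵀ * G * D)⁻¹ * Dᵀ) *ᵥ x = x - v := by
      rw [sub_mulVec, one_mulVec]
      congr 1
      rw [← mulVec_mulVec, ← mulVec_mulVec, ← mulVec_mulVec, hz, hw, hv]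
    have hΔsym2 : ((Dᵀ * (G * D))⁻¹)ᵀ = (Dᵀ * (G * D))⁻¹ := by
      rw [← Matrix.mul_assoc]
      exact hΔsym
    have hLT : (1 - D * (Dᵀ * G * D)⁻¹ * (G * D)ᵀ)ᵀ
        = 1 - (G * D) * (Dᵀ * G * D)⁻¹ * Dᵀ := by
      simp only [transpose_sub, transpose_one, transpose_mul, transpose_transpose,
        hΔsym, hGs, Matrix.mul_assoc, hΔsym2]
    rw [add_mulVec, dotProduct_add]
    congr 1
    · rw [← mulVec_mulVec, ← mulVec_mulVec, hz, hw]
    · rw [← mulVec_mulVec, ← mulVec_mulVec, hRx, dotProduct_mulVec,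
        ← mulVec_transpose, hLT, hRx]
  · rw [sub_dotProduct, dotProduct_sub, dotProduct_sub, dotProduct_comm v x]
    ring

set_option maxHeartbeats 1000000 in
lemma bfgs_step {d q : ℕ} (lam Lam : ℝ) (hlam : 0 < lam) (hll : lam ≤ Lam)
    (G : Matrix (Fin d) (Fin d) ℝ) (D : Matrix (Fin d) (Fin q) ℝ)
    (hGs : Gᵀ = G)
    (hlo : (G - lam • (1 : Matrix (Fin d) (Fin d) ℝ)).PosSemidef)
    (hhi : ((Lam • (1 : Matrix (Fin d) (Fin d) ℝ)) - G).PosSemidef)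
    (hD : D.rank = q)
    (H : Matrix (Fin d) (Fin d) ℝ) (hHs : Hᵀ = H)
    (c u : ℝ) (hc : 0 < c) (hu : 0 ≤ u)
    (hlow : ∀ x, c * (x ⬝ᵥ x) ≤ x ⬝ᵥ (H *ᵥ x))
    (hup : ∀ x, x ⬝ᵥ (H *ᵥ x) ≤ u * (x ⬝ᵥ x)) :
    (D * (Dᵀ * G * D)⁻¹ * Dᵀ +
      (1 - D * (Dᵀ * G * D)⁻¹ * (G * D)ᵀ) * H * (1 - (G * D) * (Dᵀ * G * D)⁻¹ * Dᵀ))ᵀ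
      = D * (Dᵀ * G * D)⁻¹ * Dᵀ +
      (1 - D * (Dᵀ * G * D)⁻¹ * (G * D)ᵀ) * H * (1 - (G * D) * (Dᵀ * G * D)⁻¹ * Dᵀ) ∧
    (∀ x, (c / (1 + c * Lam)) * (x ⬝ᵥ x) ≤
      x ⬝ᵥ ((D * (Dᵀ * G * D)⁻¹ * Dᵀ +
      (1 - D * (Dᵀ * G * D)⁻¹ * (G * D)ᵀ) * H * (1 - (G * D) * (Dᵀ * G * D)⁻¹ * Dᵀ)) *ᵥ x)) ∧
    (∀ x, x ⬝ᵥ ((D * (Dᵀ * G * D)⁻¹ * Dᵀ +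
      (1 - D * (Dᵀ * G * D)⁻¹ * (G * D)ᵀ) * H * (1 - (G * D) * (Dᵀ * G * D)⁻¹ * Dᵀ)) *ᵥ x)
      ≤ ((1 + Real.sqrt (Lam / lam))^2 * u + 1/lam) * (x ⬝ᵥ x)) := by
  have hGlo : ∀ x : Fin d → ℝ, lam * (x ⬝ᵥ x) ≤ x ⬝ᵥ (G *ᵥ x) := by
    intro x
    have := psd_quad hlo x
    rw [sub_mulVec, dotProduct_sub, smul_mulVec, one_mulVec,
      dotProduct_smul, smul_eq_mul] at this
    linarith
  have hGhi : ∀ x : Fin d → ℝ, x ⬝ᵥ (G *ᵥ x) ≤ Lam * (x ⬝ᵥ x) := by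
    intro x
    have := psd_quad hhi x
    rw [sub_mulVec, dotProduct_sub, smul_mulVec, one_mulVec,
      dotProduct_smul, smul_eq_mul] at this
    linarith
  have hGpsd : G.PosSemidef := by
    refine PosSemidef.of_dotProduct_mulVec_nonneg ?_ fun x => ?_
    · rwa [Matrix.IsHermitian, conjTranspose_eq_transpose_of_trivial]
    · simp only [star_trivial]
      have := hGlo x
      nlinarith [dps x]
  have hAsym : (Dᵀ * G * D)ᵀ = Dᵀ * G * D := by
    rw [transpose_mul, transpose_mul, transpose_transpose, hGs, Matrix.mul_assoc]
  have hApd : (Dᵀ * G * D).PosDef := by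
    refine PosDef.of_dotProduct_mulVec_pos ?_ fun z hz => ?_
    · rwa [Matrix.IsHermitian, conjTranspose_eq_transpose_of_trivial]
    · simp only [star_trivial]
      have hAz : (Dᵀ * G * D) *ᵥ z = Dᵀ *ᵥ (G *ᵥ (D *ᵥ z)) := by
        rw [← mulVec_mulVec, ← mulVec_mulVec]
      rw [hAz, dotProduct_mulVec, vecMul_transpose]
      have hDz : D *ᵥ z ≠ 0 := inj_of_rank D hD z hz
      have h1 := hGlo (D *ᵥ z)
      have h2 : 0 < (D *ᵥ z) ⬝ᵥ (D *ᵥ z) :=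
        lt_of_le_of_ne (dps _) (fun h => hDz (dotProduct_self_eq_zero.mp h.symm))
      nlinarith
  have hdet : IsUnit (Dᵀ * G * D).det := hApd.det_pos.ne'.isUnit
  have hAinv : (Dᵀ * G * D) * (Dᵀ * G * D)⁻¹ = 1 := mul_nonsing_inv _ hdet
  have hΔsym : ((Dᵀ * G * D)⁻¹)ᵀ = (Dᵀ * G * D)⁻¹ := by
    rw [transpose_nonsing_inv, hAsym]
  have hΔsym2 : ((Dᵀ * (G * D))⁻¹)ᵀ = (Dᵀ * (G * D))⁻¹ := by
    rw [← Matrix.mul_assoc]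
    exact hΔsym
  have hsqk0 : 0 ≤ Real.sqrt (Lam / lam) := Real.sqrt_nonneg _
  have hk1 : 1 ≤ Lam / lam := (one_le_div hlam).mpr hll
  have hck : 0 < 1 + c * Lam := by nlinarith
  have hLam0 : 0 < Lam := lt_of_lt_of_le hlam hll
  refine ⟨?_, ?_, ?_⟩
  · simp only [transpose_add, transpose_mul, transpose_sub, transpose_one,
      transpose_transpose, hΔsym, hGs, hHs, Matrix.mul_assoc, hΔsym2]
  · -- lower bound
    intro x
    obtain ⟨y, p, ip, V2, hquad, hp0, hps, hV20, hV2p, hipcs, hyy⟩ :=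
      bfgs_core lam Lam hlam hll G D hGs hGlo hGhi hGpsd hAinv hΔsym H x
    have hs0 : 0 ≤ x ⬝ᵥ x := dps x
    obtain ⟨s, hs⟩ : ∃ s, x ⬝ᵥ x = s := ⟨_, rfl⟩
    rw [hs] at hps hipcs hyy hs0 ⊢
    obtain ⟨rs, hrs2, hrs0⟩ : ∃ rs, rs ^ 2 = s ∧ 0 ≤ rs :=
      ⟨Real.sqrt s, Real.sq_sqrt hs0, Real.sqrt_nonneg _⟩
    obtain ⟨rv, hrv2, hrv0⟩ : ∃ rv, rv ^ 2 = V2 ∧ 0 ≤ rv :=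
      ⟨Real.sqrt V2, Real.sq_sqrt hV20, Real.sqrt_nonneg _⟩
    have hsv : s * V2 = (rs * rv) ^ 2 := by rw [← hrs2, ← hrv2]; ring
    have hiprr : ip ≤ rs * rv := by
      nlinarith [hipcs, hsv, mul_nonneg hrs0 hrv0]
    have hy := hlow y
    rw [hyy] at hy
    rw [hquad]
    have expand : Lam * ((1 + c * Lam) * (p + c * (s - 2 * ip + V2))) - Lam * (c * s)
        = (1 + c * Lam) * (Lam * p - V2) + (2 * c * Lam * (1 + c * Lam)) * (rs * rv - ip)
          + ((1 + c * Lam) * rv - c * Lam * rs) ^ 2 := by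
      rw [← hrs2, ← hrv2]; ring
    have key : Lam * (c * s) ≤ Lam * ((1 + c * Lam) * (p + c * (s - 2 * ip + V2))) := by
      have n1 : 0 ≤ (1 + c * Lam) * (Lam * p - V2) :=
        mul_nonneg hck.le (sub_nonneg.mpr hV2p)
      have n2 : 0 ≤ (2 * c * Lam * (1 + c * Lam)) * (rs * rv - ip) :=
        mul_nonneg (by positivity) (sub_nonneg.mpr hiprr)
      have n3 : 0 ≤ ((1 + c * Lam) * rv - c * Lam * rs) ^ 2 := sq_nonneg _
      linarith [expand, n1, n2, n3]
    have key2 : c * s ≤ (1 + c * Lam) * (p + c * (s - 2 * ip + V2)) :=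
      le_of_mul_le_mul_left key hLam0
    rw [div_mul_eq_mul_div, div_le_iff₀ hck]
    have h6 : (1 + c * Lam) * (p + c * (s - 2 * ip + V2))
        ≤ (1 + c * Lam) * (p + y ⬝ᵥ (H *ᵥ y)) :=
      mul_le_mul_of_nonneg_left (by linarith [hy]) hck.le
    have h7 : (p + y ⬝ᵥ (H *ᵥ y)) * (1 + c * Lam)
        = (1 + c * Lam) * (p + y ⬝ᵥ (H *ᵥ y)) := by ring
    linarith [key2, h6, h7]
  · -- upper bound
    intro x
    obtain ⟨y, p, ip, V2, hquad, hp0, hps, hV20, hV2p, hipcs, hyy⟩ :=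
      bfgs_core lam Lam hlam hll G D hGs hGlo hGhi hGpsd hAinv hΔsym H x
    have hs0 : 0 ≤ x ⬝ᵥ x := dps x
    obtain ⟨s, hs⟩ : ∃ s, x ⬝ᵥ x = s := ⟨_, rfl⟩
    rw [hs] at hps hipcs hyy hs0 ⊢
    obtain ⟨rs, hrs2, hrs0⟩ : ∃ rs, rs ^ 2 = s ∧ 0 ≤ rs :=
      ⟨Real.sqrt s, Real.sq_sqrt hs0, Real.sqrt_nonneg _⟩
    obtain ⟨rv, hrv2, hrv0⟩ : ∃ rv, rv ^ 2 = V2 ∧ 0 ≤ rv :=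
      ⟨Real.sqrt V2, Real.sq_sqrt hV20, Real.sqrt_nonneg _⟩
    have hsv : s * V2 = (rs * rv) ^ 2 := by rw [← hrs2, ← hrv2]; ring
    have hnip : -(rs * rv) ≤ ip := by
      nlinarith [hipcs, hsv, mul_nonneg hrs0 hrv0]
    have hrv : rv ≤ Real.sqrt (Lam / lam) * rs := by
      have hV2s : V2 ≤ (Lam / lam) * s := by
        rw [div_mul_eq_mul_div, le_div_iff₀ hlam]
        nlinarith [hV2p, hps, hLam0]
      have hkrs : Real.sqrt (Lam / lam) * rs = Real.sqrt ((Lam / lam) * s) := by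
        rw [Real.sqrt_mul (by positivity), ← hrs2, Real.sqrt_sq hrs0]
      rw [hkrs]
      rw [← Real.sqrt_sq hrv0, hrv2]
      exact Real.sqrt_le_sqrt hV2s
    have hy := hup y
    rw [hyy] at hy
    rw [hquad]
    have step1 : u * (s - 2 * ip + V2) ≤ u * (rs + rv) ^ 2 := by
      have e1 : u * (rs + rv) ^ 2 - u * (s - 2 * ip + V2)
          = 2 * (u * (ip + rs * rv)) := by
        rw [← hrs2, ← hrv2]; ring
      have n1 : 0 ≤ u * (ip + rs * rv) :=
        mul_nonneg hu (by linarith)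
      linarith [e1, n1]
    have step2 : (rs + rv) ^ 2 ≤ ((1 + Real.sqrt (Lam / lam)) * rs) ^ 2 := by
      have h1 : rs + rv ≤ (1 + Real.sqrt (Lam / lam)) * rs := by
        have : (1 + Real.sqrt (Lam / lam)) * rs = rs + Real.sqrt (Lam / lam) * rs := by
          ring
        linarith [hrv]
      exact pow_le_pow_left₀ (by linarith) h1 2
    have step2' : u * (rs + rv) ^ 2 ≤ u * ((1 + Real.sqrt (Lam / lam)) ^ 2 * s) := by
      have he : ((1 + Real.sqrt (Lam / lam)) * rs) ^ 2
          = (1 + Real.sqrt (Lam / lam)) ^ 2 * s := by rw [mul_pow, hrs2]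
      calc u * (rs + rv) ^ 2 ≤ u * ((1 + Real.sqrt (Lam / lam)) * rs) ^ 2 :=
            mul_le_mul_of_nonneg_left step2 hu
        _ = u * ((1 + Real.sqrt (Lam / lam)) ^ 2 * s) := by rw [he]
    have hp1 : p ≤ (1 / lam) * s := by
      rw [one_div, ← div_eq_inv_mul, le_div_iff₀ hlam]
      linarith [hps]
    linarith [hy, step1, step2', hp1]

lemma symm_psd {d : ℕ} (M : Matrix (Fin d) (Fin d) ℝ) (hsym : Mᵀ = M)
    (h : ∀ x, 0 ≤ x ⬝ᵥ (M *ᵥ x)) : M.PosSemidef := by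
  refine PosSemidef.of_dotProduct_mulVec_nonneg (by rwa [Matrix.IsHermitian, conjTranspose_eq_transpose_of_trivial]) fun x => ?_
  simpa only [star_trivial] using h x


set_option maxHeartbeats 1000000 in
-- aux end

/-- If `H₀ = I` and `H_{k+1}` is obtained from `H_k` by a block BFGS update with matrices
`G_k` satisfying `λI ⪯ G_k ⪯ ΛI` and full-rank sketches `D_k`, then after `M` updates
`λ_min(H_M) ≥ 1/(1 + MΛ)` and `λ_max(H_M) ≤ (1+√κ)^{2M}(1 + 1/(λ(2√κ + κ)))` with
`κ = Λ/λ` (stated via the Loewner order). -/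
theorem limited_memory_block_bfgs_eigenvalue_bounds {d q : ℕ}
    (lam Lam : ℝ) (hlam : 0 < lam) (hll : lam ≤ Lam) (M : ℕ)
    (G : ℕ → Matrix (Fin d) (Fin d) ℝ) (D : ℕ → Matrix (Fin d) (Fin q) ℝ)
    (hGsym : ∀ k, (G k).IsSymm)
    (hlo : ∀ k, (G k - lam • (1 : Matrix (Fin d) (Fin d) ℝ)).PosSemidef)
    (hhi : ∀ k, ((Lam • (1 : Matrix (Fin d) (Fin d) ℝ)) - G k).PosSemidef)
    (hD : ∀ k, (D k).rank = q)
    (H : ℕ → Matrix (Fin d) (Fin d) ℝ) (hH0 : H 0 = 1)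
    (hrec : ∀ k, H (k + 1) =
      D k * ((D k)ᵀ * G k * D k)⁻¹ * (D k)ᵀ +
      (1 - D k * ((D k)ᵀ * G k * D k)⁻¹ * (G k * D k)ᵀ) * H k *
        (1 - (G k * D k) * ((D k)ᵀ * G k * D k)⁻¹ * (D k)ᵀ)) :
    (H M - (1 / (1 + (M : ℝ) * Lam)) • (1 : Matrix (Fin d) (Fin d) ℝ)).PosSemidef ∧
    (((1 + Real.sqrt (Lam / lam)) ^ (2 * M) *
        (1 + 1 / (lam * (2 * Real.sqrt (Lam / lam) + Lam / lam)))) •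
        (1 : Matrix (Fin d) (Fin d) ℝ) - H M).PosSemidef := by
  have hLam0 : 0 < Lam := lt_of_lt_of_le hlam hll
  have hk1 : 1 ≤ Lam / lam := (one_le_div hlam).mpr hll
  have hsq1 : 1 ≤ Real.sqrt (Lam / lam) := by
    rw [show (1:ℝ) = Real.sqrt 1 by rw [Real.sqrt_one]]
    exact Real.sqrt_le_sqrt hk1
  have hsq2 : Real.sqrt (Lam / lam) ^ 2 = Lam / lam :=
    Real.sq_sqrt (by linarith)
  have hden : 0 < lam * (2 * Real.sqrt (Lam / lam) + Lam / lam) := by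
    apply mul_pos hlam
    nlinarith
  have he0 : 0 ≤ 1 / (lam * (2 * Real.sqrt (Lam / lam) + Lam / lam)) := by
    positivity
  have hrho1 : 1 ≤ (1 + Real.sqrt (Lam / lam)) ^ 2 := by nlinarith
  have hrhoe : ((1 + Real.sqrt (Lam / lam)) ^ 2 - 1) *
      (1 / (lam * (2 * Real.sqrt (Lam / lam) + Lam / lam))) = 1 / lam := by
    have h1 : (1 + Real.sqrt (Lam / lam)) ^ 2 - 1
        = 2 * Real.sqrt (Lam / lam) + Lam / lam := by nlinarith
    rw [h1]
    rw [one_div, one_div, mul_inv]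
    rw [mul_comm lam⁻¹, ← mul_assoc]
    rw [mul_inv_cancel₀ (by nlinarith : (2 * Real.sqrt (Lam / lam) + Lam / lam) ≠ 0)]
    rw [one_mul]
  have main : ∀ k : ℕ, (H k)ᵀ = H k ∧
      (∀ x, (1 / (1 + (k : ℝ) * Lam)) * (x ⬝ᵥ x) ≤ x ⬝ᵥ (H k *ᵥ x)) ∧
      (∀ x, x ⬝ᵥ (H k *ᵥ x) ≤
        (((1 + Real.sqrt (Lam / lam)) ^ 2) ^ k *
          (1 + 1 / (lam * (2 * Real.sqrt (Lam / lam) + Lam / lam)))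
          - 1 / (lam * (2 * Real.sqrt (Lam / lam) + Lam / lam))) * (x ⬝ᵥ x)) := by
    intro k
    induction k with
    | zero =>
      rw [hH0]
      refine ⟨transpose_one, fun x => ?_, fun x => ?_⟩ <;>
        simp only [one_mulVec, Nat.cast_zero, zero_mul, add_zero, pow_zero, one_mul] <;>
        norm_num
    | succ k ih =>
      obtain ⟨hsym, hlo', hhi'⟩ := ih
      have hc : 0 < 1 / (1 + (k : ℝ) * Lam) := by positivity
      have hpow1 : 1 ≤ ((1 + Real.sqrt (Lam / lam)) ^ 2) ^ k := one_le_pow₀ hrho1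
      have hu0 : 0 ≤ ((1 + Real.sqrt (Lam / lam)) ^ 2) ^ k *
          (1 + 1 / (lam * (2 * Real.sqrt (Lam / lam) + Lam / lam)))
          - 1 / (lam * (2 * Real.sqrt (Lam / lam) + Lam / lam)) := by nlinarith
      obtain ⟨s1, s2, s3⟩ := bfgs_step lam Lam hlam hll (G k) (D k) (hGsym k)
        (hlo k) (hhi k) (hD k) (H k) hsym _ _ hc hu0 hlo' hhi'
      rw [← hrec k] at s1 s2 s3
      refine ⟨s1, fun x => ?_, fun x => ?_⟩
      · have h := s2 x
        have hcl : (1 / (1 + (k : ℝ) * Lam)) / (1 + (1 / (1 + (k : ℝ) * Lam)) * Lam)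
            = 1 / (1 + ((k + 1 : ℕ) : ℝ) * Lam) := by
          have h1 : (0:ℝ) < 1 + (k:ℝ) * Lam := by positivity
          have h2 : (0:ℝ) < 1 + ((k + 1 : ℕ) : ℝ) * Lam := by positivity
          have h3 : (0:ℝ) < 1 + (1 / (1 + (k : ℝ) * Lam)) * Lam := by positivity
          push_cast
          push_cast at h2
          field_simp
          ring
        rwa [hcl] at h
      · have h := s3 x
        have hu : (1 + Real.sqrt (Lam / lam)) ^ 2 *
            (((1 + Real.sqrt (Lam / lam)) ^ 2) ^ k *
              (1 + 1 / (lam * (2 * Real.sqrt (Lam / lam) + Lam / lam)))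
              - 1 / (lam * (2 * Real.sqrt (Lam / lam) + Lam / lam))) + 1 / lam
            = ((1 + Real.sqrt (Lam / lam)) ^ 2) ^ (k + 1) *
              (1 + 1 / (lam * (2 * Real.sqrt (Lam / lam) + Lam / lam)))
              - 1 / (lam * (2 * Real.sqrt (Lam / lam) + Lam / lam)) := by
          rw [pow_succ]
          linear_combination (-1 : ℝ) * hrhoe
        rwa [hu] at h
  obtain ⟨hsymM, hloM, hhiM⟩ := main M
  constructor
  · refine symm_psd _ ?_ fun x => ?_
    · rw [transpose_sub, hsymM, transpose_smul, transpose_one]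
    · rw [sub_mulVec, dotProduct_sub, smul_mulVec, one_mulVec,
        dotProduct_smul, smul_eq_mul]
      linarith [hloM x]
  · refine symm_psd _ ?_ fun x => ?_
    · rw [transpose_sub, hsymM, transpose_smul, transpose_one]
    · rw [sub_mulVec, dotProduct_sub, smul_mulVec, one_mulVec,
        dotProduct_smul, smul_eq_mul]
      have hpm : (1 + Real.sqrt (Lam / lam)) ^ (2 * M)
          = ((1 + Real.sqrt (Lam / lam)) ^ 2) ^ M := by
        rw [← pow_mul]
      have hbnd := hhiM x
      have hs0 : 0 ≤ x ⬝ᵥ x := dps x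
      have hle : (((1 + Real.sqrt (Lam / lam)) ^ 2) ^ M *
          (1 + 1 / (lam * (2 * Real.sqrt (Lam / lam) + Lam / lam)))
          - 1 / (lam * (2 * Real.sqrt (Lam / lam) + Lam / lam)))
          ≤ ((1 + Real.sqrt (Lam / lam)) ^ 2) ^ M *
            (1 + 1 / (lam * (2 * Real.sqrt (Lam / lam) + Lam / lam))) := by
        linarith [he0]
      rw [hpm]
      nlinarith [hbnd, hle, hs0,
        mul_le_mul_of_nonneg_right hle hs0]
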